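/- arXiv:1910.09475 — 2 statements merged into one kernel-verified Lean document; each statement's English description precedes it below -/
import Mathlib

section
/- For all integers j, k, the series Σ_{t∈ℤ} ρ(t−j)* ρ(t−k) converges absolutely and equals ρ(j−k), where z* denotes complex conjugation. -/
open MeasureTheory Filter Topology Matrix

/-- Fourier coefficients of the indicator of the band `J`:
`ρ(t) = (1/(2π)) ∫_J e^{i t ω} dω`. -/
noncomputable def rho (J : Set ℝ) (t : ℤ) : ℂ :=
  (1 / (2 * Real.pi)) * ∫ ω in J, Complex.exp (Complex.I * (t : ℂ) * (ω : ℂ))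

/-- The `N × N` Toeplitz matrix with `(j,k)` entry `ρ(j - k)`. -/
noncomputable def Rmat (J : Set ℝ) (N : ℕ) : Matrix (Fin N) (Fin N) ℂ :=
  Matrix.of fun j k => rho J ((j : ℤ) - (k : ℤ))

namespace Stmt6Aux

instance : Fact (0 < 2 * Real.pi) := ⟨by positivity⟩

noncomputable def fm (J : Set ℝ) (m : ℤ) : ℝ → ℂ :=
  Set.indicator J fun x => Complex.exp (Complex.I * (m : ℂ) * (x : ℂ))

noncomputable def gm (J : Set ℝ) (m : ℤ) : AddCircle (2 * Real.pi) → ℂ :=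
  AddCircle.liftIoc (2 * Real.pi) (-Real.pi) (fm J m)

lemma fm_meas {J : Set ℝ} (hJ : MeasurableSet J) (m : ℤ) : Measurable (fm J m) :=
  (Complex.continuous_exp.comp (by fun_prop)).measurable.indicator hJ

lemma gm_meas {J : Set ℝ} (hJ : MeasurableSet J) (m : ℤ) : Measurable (gm J m) :=
  ((fm_meas hJ m).comp measurable_subtype_coe).comp
    (AddCircle.measurableEquivIoc (2 * Real.pi) (-Real.pi)).measurable

lemma fm_bound (J : Set ℝ) (m : ℤ) (x : ℝ) : ‖fm J m x‖ ≤ 1 := by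
  unfold fm
  by_cases hx : x ∈ J
  · simp only [Set.indicator_of_mem hx, Complex.norm_exp]
    simp [Complex.mul_re]
  · simp [Set.indicator_of_notMem hx]

lemma gm_memLp {J : Set ℝ} (hJ : MeasurableSet J) (m : ℤ) :
    MemLp (gm J m) 2 AddCircle.haarAddCircle :=
  MemLp.of_bound (gm_meas hJ m).aestronglyMeasurable 1
    (ae_of_all _ fun _ => fm_bound J m _)

lemma setIoc_ae (J : Set ℝ) (hJsub : J ⊆ Set.Icc (-Real.pi) Real.pi) :
    (Set.Ioc (-Real.pi) (-Real.pi + 2 * Real.pi) ∩ J : Set ℝ) =ᵐ[volume] J := by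
  rw [MeasureTheory.ae_eq_set]
  constructor
  · exact measure_mono_null (fun x hx => ((hx.2 hx.1.2).elim : x ∈ (∅ : Set ℝ))) measure_empty
  · refine measure_mono_null (fun x hx => ?_) (measure_singleton (-Real.pi))
    obtain ⟨hxJ, hx⟩ := hx
    have h1 := hJsub hxJ
    have h2 : x ∉ Set.Ioc (-Real.pi) (-Real.pi + 2 * Real.pi) := fun h => hx ⟨h, hxJ⟩
    simp only [Set.mem_Ioc, not_and_or, not_lt, not_le] at h2
    simp only [Set.mem_Icc] at h1
    rcases h2 with h2 | h2
    · exact Set.mem_singleton_iff.mpr (le_antisymm h2 h1.1)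
    · exfalso; linarith [h1.2]

lemma fourierCoeff_gm {J : Set ℝ} (hJ : MeasurableSet J)
    (hJsub : J ⊆ Set.Icc (-Real.pi) Real.pi) (m n : ℤ) :
    fourierCoeff (gm J m) n = rho J (m - n) := by
  rw [fourierCoeff_eq_intervalIntegral _ n (-Real.pi)]
  have hle : (-Real.pi) ≤ -Real.pi + 2 * Real.pi := by linarith [Real.pi_pos]
  have hπ : (Real.pi : ℂ) ≠ 0 := by
    exact_mod_cast Complex.ofReal_ne_zero.mpr Real.pi_ne_zero
  have h1 : ∫ x in (-Real.pi)..(-Real.pi + 2 * Real.pi),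
      fourier (-n) (x : AddCircle (2 * Real.pi)) • gm J m x
      = ∫ x in J, Complex.exp (Complex.I * ((m - n : ℤ) : ℂ) * (x : ℂ)) := by
    rw [intervalIntegral.integral_of_le hle]
    rw [show (∫ x in Set.Ioc (-Real.pi) (-Real.pi + 2 * Real.pi),
        fourier (-n) (x : AddCircle (2 * Real.pi)) • gm J m ↑x)
        = ∫ x in Set.Ioc (-Real.pi) (-Real.pi + 2 * Real.pi),
          Set.indicator J (fun x : ℝ => Complex.exp (Complex.I * ((m - n : ℤ) : ℂ) * x)) x from
      setIntegral_congr_fun measurableSet_Ioc fun x hx => ?_]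
    · rw [setIntegral_indicator hJ]
      exact setIntegral_congr_set (setIoc_ae J hJsub)
    · rw [show gm J m ↑x = fm J m x from AddCircle.liftIoc_coe_apply hx]
      rw [fourier_coe_apply, smul_eq_mul]
      unfold fm
      by_cases hxJ : x ∈ J
      · simp only [Set.indicator_of_mem hxJ]
        rw [← Complex.exp_add]
        congr 1
        push_cast
        field_simp
        ring
      · simp [Set.indicator_of_notMem hxJ]
  rw [h1, rho, Complex.real_smul]
  push_cast
  ring

lemma fm_conj_mul (J : Set ℝ) (j k : ℤ) (x : ℝ) :
    (starRingEnd ℂ) (fm J (-j) x) * fm J (-k) x = fm J (j - k) x := by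
  unfold fm
  by_cases hx : x ∈ J
  · simp only [Set.indicator_of_mem hx]
    rw [← Complex.exp_conj, ← Complex.exp_add]
    congr 1
    simp only [_root_.map_mul, Complex.conj_I, _root_.map_intCast, Complex.conj_ofReal]
    push_cast
    ring
  · simp [Set.indicator_of_notMem hx]

lemma gm_conj_mul (J : Set ℝ) (j k : ℤ) (z : AddCircle (2 * Real.pi)) :
    (starRingEnd ℂ) (gm J (-j) z) * gm J (-k) z = gm J (j - k) z :=
  fm_conj_mul J j k _

lemma fourierCoeff_congr_ae {f g : AddCircle (2 * Real.pi) → ℂ}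
    (h : f =ᵐ[AddCircle.haarAddCircle] g) (n : ℤ) : fourierCoeff f n = fourierCoeff g n := by
  unfold fourierCoeff
  exact integral_congr_ae (h.mono fun x hx => by dsimp only; rw [hx])

end Stmt6Aux

open Stmt6Aux
open scoped InnerProductSpace ENNReal

/-- For all integers `j, k`, the series `Σ_{t∈ℤ} ρ(t-j)* ρ(t-k)` converges
absolutely and equals `ρ(j-k)`. -/
theorem stmt6 (J : Set ℝ) (hJmeas : MeasurableSet J)
    (hJsub : J ⊆ Set.Icc (-Real.pi) Real.pi) (j k : ℤ) :
    Summable (fun t : ℤ => ‖(starRingEnd ℂ) (rho J (t - j)) * rho J (t - k)‖) ∧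
    ∑' t : ℤ, (starRingEnd ℂ) (rho J (t - j)) * rho J (t - k) = rho J (j - k) := by
  classical
  have hmj := gm_memLp hJmeas (-j)
  have hmk := gm_memLp hJmeas (-k)
  set Gj := hmj.toLp _ with hGjdef
  set Gk := hmk.toLp _ with hGkdef
  have hrj : ∀ n : ℤ, fourierBasis.repr Gj n = rho J (-n - j) := by
    intro n
    rw [fourierBasis_repr, fourierCoeff_congr_ae hmj.coeFn_toLp n,
      fourierCoeff_gm hJmeas hJsub]
    congr 1; ring
  have hrk : ∀ n : ℤ, fourierBasis.repr Gk n = rho J (-n - k) := by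
    intro n
    rw [fourierBasis_repr, fourierCoeff_congr_ae hmk.coeFn_toLp n,
      fourierCoeff_gm hJmeas hJsub]
    congr 1; ring
  -- square summability
  have hsq : ∀ G : Lp ℂ 2 (AddCircle.haarAddCircle (T := 2 * Real.pi)),
      Summable (fun n : ℤ => ‖fourierBasis.repr G n‖ ^ 2) := by
    intro G
    have h := lp.memℓp (fourierBasis.repr G)
    rw [memℓp_gen_iff (by norm_num)] at h
    have h2 : ((2 : ℝ≥0∞)).toReal = (2 : ℝ) := by norm_num
    rw [h2] at h
    refine h.congr fun n => ?_
    exact_mod_cast Real.rpow_natCast _ 2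
  have hprod : Summable (fun n : ℤ => ‖fourierBasis.repr Gj n‖ * ‖fourierBasis.repr Gk n‖) := by
    refine Summable.of_nonneg_of_le (fun n => by positivity) (fun n => ?_)
      (((hsq Gj).add (hsq Gk)).div_const 2)
    nlinarith [sq_nonneg (‖fourierBasis.repr Gj n‖ - ‖fourierBasis.repr Gk n‖)]
  -- inner product
  have hinner : (⟪Gj, Gk⟫_ℂ : ℂ) = rho J (j - k) := by
    rw [MeasureTheory.L2.inner_def]
    have heq : (∫ x, (⟪Gj x, Gk x⟫_ℂ : ℂ) ∂AddCircle.haarAddCircle)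
        = ∫ x, gm J (j - k) x ∂AddCircle.haarAddCircle := by
      refine integral_congr_ae ?_
      filter_upwards [hmj.coeFn_toLp, hmk.coeFn_toLp] with x hx hx'
      rw [RCLike.inner_apply, hx, hx']
      rw [mul_comm]
      exact gm_conj_mul J j k x
    rw [heq]
    have h0 : (∫ x, gm J (j - k) x ∂AddCircle.haarAddCircle)
        = fourierCoeff (gm J (j - k)) 0 := by
      unfold fourierCoeff
      simp [neg_zero, fourier_zero]
    rw [h0, fourierCoeff_gm hJmeas hJsub, sub_zero]
  -- term identification
  have hterm : ∀ n : ℤ, (⟪Gj, (fourierBasis : HilbertBasis ℤ ℂ _) n⟫_ℂ) * ⟪(fourierBasis : HilbertBasis ℤ ℂ _) n, Gk⟫_ℂ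
      = (starRingEnd ℂ) (rho J (-n - j)) * rho J (-n - k) := by
    intro n
    rw [← HilbertBasis.repr_apply_apply, ← inner_conj_symm,
      ← HilbertBasis.repr_apply_apply, hrj, hrk]
  constructor
  · rw [← (Equiv.neg ℤ).summable_iff]
    refine hprod.congr fun n => ?_
    simp only [Function.comp, Equiv.neg_apply]
    simp [hrj, hrk]
  · rw [← (Equiv.neg ℤ).tsum_eq
      (fun t : ℤ => (starRingEnd ℂ) (rho J (t - j)) * rho J (t - k))]
    calc ∑' n : ℤ, (starRingEnd ℂ) (rho J ((Equiv.neg ℤ) n - j)) * rho J ((Equiv.neg ℤ) n - k)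
        = ∑' n : ℤ, (⟪Gj, (fourierBasis : HilbertBasis ℤ ℂ _) n⟫_ℂ) * ⟪(fourierBasis : HilbertBasis ℤ ℂ _) n, Gk⟫_ℂ := by
          refine tsum_congr fun n => ?_
          rw [hterm n]; rfl
      _ = ⟪Gj, Gk⟫_ℂ := fourierBasis.tsum_inner_mul_inner Gj Gk
      _ = rho J (j - k) := hinner
end

section
/- Define 𝕁(N) := Σ_{j=1}^{N} λ_j(N)(1 − λ_j(N)). Then every summand is nonnegative and lim_{N→∞} 𝕁(N)/N = 0, i.e. 𝕁(N) = o(N). -/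
open MeasureTheory Filter Topology Matrix

section MatrixAux

variable {n : Type*} [Fintype n] [DecidableEq n] {A : Matrix n n ℂ}

lemma trace_eq_sum_eig (hA : A.IsHermitian) : A.trace = ∑ i, (hA.eigenvalues i : ℂ) := by
  conv_lhs => rw [hA.spectral_theorem]
  rw [Unitary.conjStarAlgAut_apply, Matrix.trace_mul_cycle,
    (Matrix.mem_unitaryGroup_iff').mp (Matrix.IsHermitian.eigenvectorUnitary hA).2,
    one_mul, Matrix.trace_diagonal]
  rfl

lemma trace_sq_eq_sum_eig_sq (hA : A.IsHermitian) :
    (A * A).trace = ∑ i, ((hA.eigenvalues i : ℂ))^2 := by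
  have h : star (hA.eigenvectorUnitary : Matrix n n ℂ) * A * (hA.eigenvectorUnitary : Matrix n n ℂ)
      = diagonal (RCLike.ofReal ∘ hA.eigenvalues) := by
    rw [← hA.conjStarAlgAut_star_eigenvectorUnitary, Unitary.conjStarAlgAut_apply,
      Unitary.coe_star, star_star]
  have hU := (Matrix.mem_unitaryGroup_iff).mp (Matrix.IsHermitian.eigenvectorUnitary hA).2
  have key : star (hA.eigenvectorUnitary : Matrix n n ℂ) * (A * A) *
      (hA.eigenvectorUnitary : Matrix n n ℂ)
      = diagonal (RCLike.ofReal ∘ hA.eigenvalues) * diagonal (RCLike.ofReal ∘ hA.eigenvalues) := by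
    rw [← h]
    calc star (hA.eigenvectorUnitary : Matrix n n ℂ) * (A * A) *
        (hA.eigenvectorUnitary : Matrix n n ℂ)
        = (star (hA.eigenvectorUnitary : Matrix n n ℂ) * A) *
          ((hA.eigenvectorUnitary : Matrix n n ℂ) * star (hA.eigenvectorUnitary : Matrix n n ℂ)) *
          (A * (hA.eigenvectorUnitary : Matrix n n ℂ)) := by rw [hU]; noncomm_ring
      _ = _ := by noncomm_ring
  have htr : (A * A).trace = (star (hA.eigenvectorUnitary : Matrix n n ℂ) * (A * A) *
      (hA.eigenvectorUnitary : Matrix n n ℂ)).trace := by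
    rw [Matrix.trace_mul_cycle, ← Matrix.mul_assoc, hU, one_mul]
  rw [htr, key, Matrix.diagonal_mul_diagonal, Matrix.trace_diagonal]
  simp [Function.comp, pow_two]

end MatrixAux

section FourierAux

variable (J : Set ℝ)

local instance : Fact (0 < 2 * Real.pi) := ⟨by positivity⟩

/-- The indicator of `J`, lifted to the additive circle of circumference `2π`. -/
noncomputable def gg : AddCircle (2 * Real.pi) → ℂ :=
  AddCircle.liftIoc (2 * Real.pi) (-Real.pi) (J.indicator 1)

lemma Ioc_inter_ae (hJsub : J ⊆ Set.Icc (-Real.pi) Real.pi) :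
    (Set.Ioc (-Real.pi) (-Real.pi + 2 * Real.pi) ∩ J : Set ℝ) =ᵐ[volume] J := by
  have h2 : J \ (Set.Ioc (-Real.pi) (-Real.pi + 2 * Real.pi) ∩ J) ⊆ {-Real.pi} := by
    intro x hx
    rcases hx with ⟨hxJ, hxn⟩
    have hxI := hJsub hxJ
    simp only [Set.mem_inter_iff, not_and, Set.mem_Ioc] at hxn
    have hπ := Real.pi_pos
    rcases hxI with ⟨hx1, hx2⟩
    by_contra hne
    simp only [Set.mem_singleton_iff] at hne
    exact (hxn ⟨lt_of_le_of_ne hx1 (Ne.symm hne), by linarith⟩) hxJ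
  have h0 : volume (J \ (Set.Ioc (-Real.pi) (-Real.pi + 2 * Real.pi) ∩ J)) = 0 :=
    measure_mono_null h2 (by simp)
  refine MeasureTheory.ae_eq_set.2 ⟨?_, h0⟩
  have h1 : (Set.Ioc (-Real.pi) (-Real.pi + 2 * Real.pi) ∩ J) \ J = ∅ :=
    Set.diff_eq_empty.2 Set.inter_subset_right
  rw [h1]; simp

lemma rho_eq_fourierCoeff (hJmeas : MeasurableSet J)
    (hJsub : J ⊆ Set.Icc (-Real.pi) Real.pi) (t : ℤ) :
    rho J t = fourierCoeff (gg J) (-t) := by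
  rw [fourierCoeff_eq_intervalIntegral (gg J) (-t) (-Real.pi)]
  have hle : -Real.pi ≤ -Real.pi + 2 * Real.pi := by have := Real.pi_pos; linarith
  rw [intervalIntegral.integral_of_le hle]
  have hcongr : ∀ x ∈ Set.Ioc (-Real.pi) (-Real.pi + 2 * Real.pi),
      fourier (-(-t)) (x : AddCircle (2 * Real.pi)) • gg J x
        = J.indicator (fun ω => Complex.exp (Complex.I * (t : ℂ) * (ω : ℂ))) x := by
    intro x hx
    rw [gg, AddCircle.liftIoc_coe_apply hx, fourier_coe_apply]
    have hπ : (Real.pi : ℂ) ≠ 0 := by exact_mod_cast Real.pi_ne_zero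
    by_cases hxJ : x ∈ J
    · simp only [Set.indicator_of_mem hxJ, Pi.one_apply, smul_eq_mul, mul_one]
      congr 1
      push_cast
      field_simp
    · simp [Set.indicator_of_notMem hxJ]
  rw [MeasureTheory.setIntegral_congr_fun measurableSet_Ioc hcongr,
    MeasureTheory.setIntegral_indicator hJmeas,
    MeasureTheory.setIntegral_congr_set (Ioc_inter_ae J hJsub)]
  rw [rho, Complex.real_smul]
  push_cast
  ring

lemma gg_measurable (hJmeas : MeasurableSet J) : Measurable (gg J) := by
  have h1 : Measurable (J.indicator (1 : ℝ → ℂ)) :=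
    (measurable_const).indicator hJmeas
  have h2 : gg J = (J.indicator (1 : ℝ → ℂ)) ∘ (Subtype.val ∘
      (AddCircle.measurableEquivIoc (2 * Real.pi) (-Real.pi))) := rfl
  rw [h2]
  exact h1.comp (measurable_subtype_coe.comp
    (AddCircle.measurableEquivIoc (2 * Real.pi) (-Real.pi)).measurable)

lemma gg_memLp (hJmeas : MeasurableSet J) :
    MemLp (gg J) 2 (AddCircle.haarAddCircle (T := 2 * Real.pi)) := by
  have hb : ∀ x, ‖gg J x‖ ≤ 1 := by
    intro x
    rw [gg, AddCircle.liftIoc]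
    simp only [Function.comp_apply, Set.restrict_apply]
    refine le_trans (norm_indicator_le_norm_self _ _) (by simp)
  exact (memLp_top_of_bound ((gg_measurable J hJmeas).aestronglyMeasurable) 1
    (Filter.Eventually.of_forall hb)).mono_exponent le_top

lemma rho_zero : rho J 0 = ((volume J).toReal / (2 * Real.pi) : ℝ) := by
  rw [rho]
  push_cast
  simp only [mul_zero, zero_mul, Complex.exp_zero, Int.cast_zero]
  rw [MeasureTheory.setIntegral_const]
  ring_nf
  simp [Complex.real_smul]
  rfl

lemma integral_gg_sq (hJmeas : MeasurableSet J) (hJsub : J ⊆ Set.Icc (-Real.pi) Real.pi) :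
    ∫ x, ‖gg J x‖^2 ∂(AddCircle.haarAddCircle (T := 2 * Real.pi))
      = (volume J).toReal / (2 * Real.pi) := by
  have hπ := Real.pi_pos
  have h1 : ∫ x, ‖gg J x‖^2 ∂(volume : Measure (AddCircle (2 * Real.pi)))
      = (2 * Real.pi) * ∫ x, ‖gg J x‖^2 ∂(AddCircle.haarAddCircle (T := 2 * Real.pi)) := by
    rw [AddCircle.volume_eq_smul_haarAddCircle, MeasureTheory.integral_smul_measure,
      ENNReal.toReal_ofReal (by positivity)]
    simp
  have h2 : ∫ x, ‖gg J x‖^2 ∂(volume : Measure (AddCircle (2 * Real.pi)))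
      = (volume J).toReal := by
    rw [← AddCircle.integral_preimage (2 * Real.pi) (-Real.pi) (fun b => ‖gg J b‖^2)]
    have hcongr : ∀ x ∈ Set.Ioc (-Real.pi) (-Real.pi + 2 * Real.pi),
        ‖gg J (x : AddCircle (2 * Real.pi))‖^2 = J.indicator (fun _ => (1:ℝ)) x := by
      intro x hx
      rw [gg, AddCircle.liftIoc_coe_apply hx]
      by_cases hxJ : x ∈ J
      · simp [Set.indicator_of_mem hxJ]
      · simp [Set.indicator_of_notMem hxJ]
    rw [MeasureTheory.setIntegral_congr_fun measurableSet_Ioc hcongr,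
      MeasureTheory.setIntegral_indicator hJmeas,
      MeasureTheory.setIntegral_congr_set (Ioc_inter_ae J hJsub),
      MeasureTheory.setIntegral_const]
    simp
    rfl
  rw [h2] at h1
  field_simp at h1 ⊢
  linarith

lemma hasSum_rho_sq (hJmeas : MeasurableSet J)
    (hJsub : J ⊆ Set.Icc (-Real.pi) Real.pi) :
    HasSum (fun t : ℤ => ‖rho J t‖^2) ((rho J 0).re) := by
  set fL := (gg_memLp J hJmeas).toLp (gg J) with hfL
  have hae : ∀ n : ℤ, fourierCoeff (fL : AddCircle (2 * Real.pi) → ℂ) n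
      = fourierCoeff (gg J) n := by
    intro n
    apply MeasureTheory.integral_congr_ae
    filter_upwards [(gg_memLp J hJmeas).coeFn_toLp] with x hx
    rw [hx]
  have hsummable : Summable fun n : ℤ => ‖fourierCoeff (gg J) n‖^2 := by
    have hmem := lp.memℓp (fourierBasis.repr fL)
    have h2 := hmem.summable (by norm_num : 0 < (2 : ENNReal).toReal)
    refine h2.congr fun n => ?_
    rw [fourierBasis_repr, hae n]
    norm_num
  have hParseval := tsum_sq_fourierCoeff fL
  have hInt : ∫ t, ‖(fL : AddCircle (2 * Real.pi) → ℂ) t‖^2 ∂AddCircle.haarAddCircle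
      = (rho J 0).re := by
    rw [rho_zero]
    simp only [Complex.ofReal_re]
    rw [← integral_gg_sq J hJmeas hJsub]
    apply MeasureTheory.integral_congr_ae
    filter_upwards [(gg_memLp J hJmeas).coeFn_toLp] with x hx
    rw [hx]
  have htsum : ∑' n : ℤ, ‖fourierCoeff (gg J) n‖^2 = (rho J 0).re := by
    rw [← hInt, ← hParseval]
    exact tsum_congr fun n => by rw [hae n]
  have hs : HasSum (fun n : ℤ => ‖fourierCoeff (gg J) n‖^2) ((rho J 0).re) :=
    htsum ▸ hsummable.hasSum
  have hcomp := ((Equiv.neg ℤ).hasSum_iff).2 hs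
  refine hcomp.congr_fun fun t => ?_
  simp only [Function.comp_apply, Equiv.neg_apply]
  rw [rho_eq_fourierCoeff J hJmeas hJsub t]

end FourierAux

section CombAux

lemma sum_shift (c : ℤ → ℝ) (n : ℕ) (j : Fin n) :
    ∑ k : Fin n, c ((j : ℤ) - (k : ℤ))
      = ∑ t ∈ Finset.Icc ((j : ℤ) - ((n : ℤ) - 1)) (j : ℤ), c t := by
  refine Finset.sum_bij' (fun (k : Fin n) _ => (j : ℤ) - (k : ℤ))
    (fun t ht => ⟨((j : ℤ) - t).toNat, ?_⟩) ?_ ?_ ?_ ?_ ?_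
  · simp only [Finset.mem_Icc] at ht
    have := j.isLt
    omega
  · intro k _
    simp only [Finset.mem_Icc]
    have := k.isLt
    have := j.isLt
    omega
  · intro t ht
    exact Finset.mem_univ _
  · intro k hk
    apply Fin.ext
    simp only [Fin.val_mk]
    have := k.isLt
    have := j.isLt
    omega
  · intro t ht
    simp only [Finset.mem_Icc] at ht
    simp only [Fin.val_mk]
    have := j.isLt
    omega
  · intro k _
    rfl

lemma card_middle (n M : ℕ) :
    (Finset.univ.filter (fun j : Fin n => M ≤ (j : ℕ) ∧ (j : ℕ) + M < n)).card
      = n - M - M := by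
  rw [show n - M - M = (Finset.Ico M (n - M)).card by rw [Nat.card_Ico]]
  refine Finset.card_bij (fun j _ => (j : ℕ)) ?_ ?_ ?_
  · intro j hj
    simp only [Finset.mem_filter] at hj
    simp only [Finset.mem_Ico]
    omega
  · intro a ha b hb h
    exact Fin.ext h
  · intro a ha
    simp only [Finset.mem_Ico] at ha
    have han : a < n := by omega
    refine ⟨⟨a, han⟩, ?_, rfl⟩
    simp only [Finset.mem_filter, Finset.mem_univ, true_and]
    omega

end CombAux

/-- With `𝕁(N) := Σ_j λ_j(N)(1-λ_j(N))`, every summand is nonnegative and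
`lim_{N→∞} 𝕁(N)/N = 0`, i.e. `𝕁(N) = o(N)`. -/
theorem stmt9 (J : Set ℝ) (hJmeas : MeasurableSet J)
    (hJsub : J ⊆ Set.Icc (-Real.pi) Real.pi)
    (hH : ∀ N : ℕ, (Rmat J N).IsHermitian)
    (hlam : ∀ (N : ℕ) (j : Fin N), (hH N).eigenvalues j ∈ Set.Icc (0 : ℝ) 1) :
    (∀ (N : ℕ) (j : Fin N), 0 ≤ (hH N).eigenvalues j * (1 - (hH N).eigenvalues j)) ∧
    Tendsto
      (fun N : ℕ => (∑ j : Fin N, (hH N).eigenvalues j * (1 - (hH N).eigenvalues j)) / N)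
      atTop (𝓝 0) := by
  classical
  have part1 : ∀ (N : ℕ) (j : Fin N), 0 ≤ (hH N).eigenvalues j * (1 - (hH N).eigenvalues j) := by
    intro N j
    have h := hlam N j
    exact mul_nonneg h.1 (by linarith [h.2])
  refine ⟨part1, ?_⟩
  set c : ℤ → ℝ := fun t => ‖rho J t‖^2 with hc
  have hc0 : ∀ t, 0 ≤ c t := fun t => by positivity
  set S : ℝ := (rho J 0).re with hSdef
  have hsum : HasSum c S := hasSum_rho_sq J hJmeas hJsub
  -- the exact identity 𝕁 N = N·S − Σ_{j,k} c(j−k)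
  have hid : ∀ N : ℕ, ∑ j : Fin N, (hH N).eigenvalues j * (1 - (hH N).eigenvalues j)
      = (N : ℝ) * S - ∑ j : Fin N, ∑ k : Fin N, c ((j : ℤ) - (k : ℤ)) := by
    intro N
    have h1 : ∑ j : Fin N, (hH N).eigenvalues j = (N : ℝ) * S := by
      have ht := congrArg Complex.re (trace_eq_sum_eig (hH N))
      have hdiag : (Rmat J N).trace = (N : ℂ) * rho J 0 := by
        rw [Matrix.trace]
        have : ∀ j : Fin N, (Rmat J N).diag j = rho J 0 := by
          intro j
          simp [Matrix.diag, Rmat]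
        rw [Finset.sum_congr rfl (fun j _ => this j)]
        simp [Finset.card_univ]
      rw [hdiag] at ht
      simpa [Complex.re_sum, hSdef] using ht.symm
    have h2 : ∑ j : Fin N, ((hH N).eigenvalues j)^2
        = ∑ j : Fin N, ∑ k : Fin N, c ((j : ℤ) - (k : ℤ)) := by
      have ht := congrArg Complex.re (trace_sq_eq_sum_eig_sq (hH N))
      have hmul : (Rmat J N * Rmat J N).trace
          = ∑ j : Fin N, ∑ k : Fin N, ((c ((j : ℤ) - (k : ℤ)) : ℝ) : ℂ) := by
        rw [Matrix.trace]
        refine Finset.sum_congr rfl fun j _ => ?_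
        rw [Matrix.diag, Matrix.mul_apply]
        refine Finset.sum_congr rfl fun k _ => ?_
        have hherm : Rmat J N k j = star (Rmat J N j k) := by
          conv_lhs => rw [← hH N]
          rw [Matrix.conjTranspose_apply]
        rw [hherm, Complex.star_def, Complex.mul_conj]
        have hRmat : Rmat J N j k = rho J ((j : ℤ) - (k : ℤ)) := rfl
        rw [hRmat, hc]
        norm_cast
        simp [Complex.sq_norm]
      rw [hmul] at ht
      have hL : (∑ j : Fin N, ∑ k : Fin N, ((c ((j : ℤ) - (k : ℤ)) : ℝ) : ℂ)).re
          = ∑ j : Fin N, ∑ k : Fin N, c ((j : ℤ) - (k : ℤ)) := by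
        simp [Complex.re_sum]
      have hR : (∑ j : Fin N, ((hH N).eigenvalues j : ℂ)^2).re
          = ∑ j : Fin N, ((hH N).eigenvalues j)^2 := by
        simp [Complex.re_sum, ← Complex.ofReal_pow]
      rw [hL, hR] at ht
      exact ht.symm
    calc ∑ j : Fin N, (hH N).eigenvalues j * (1 - (hH N).eigenvalues j)
        = ∑ j : Fin N, ((hH N).eigenvalues j - ((hH N).eigenvalues j)^2) := by
          refine Finset.sum_congr rfl fun j _ => ?_
          ring
      _ = (∑ j : Fin N, (hH N).eigenvalues j) - ∑ j : Fin N, ((hH N).eigenvalues j)^2 :=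
          Finset.sum_sub_distrib _ _
      _ = (N : ℝ) * S - ∑ j : Fin N, ∑ k : Fin N, c ((j : ℤ) - (k : ℤ)) := by
          rw [h1, h2]
  -- squeeze
  rw [Metric.tendsto_atTop]
  intro ε hε
  -- choose M capturing all but ε/2 of the sum
  have htend := Metric.tendsto_nhds.mp hsum (ε/2) (by positivity)
  rw [SummationFilter.unconditional_filter, Filter.eventually_atTop] at htend
  obtain ⟨F₀, hF₀⟩ := htend
  set M : ℕ := F₀.sup (fun t => t.natAbs) with hMdef
  have hsub : F₀ ⊆ Finset.Icc (-(M : ℤ)) (M : ℤ) := by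
    intro t ht
    have hle : t.natAbs ≤ M := Finset.le_sup (f := fun t : ℤ => t.natAbs) ht
    simp only [Finset.mem_Icc]
    omega
  set SM : ℝ := ∑ t ∈ Finset.Icc (-(M : ℤ)) (M : ℤ), c t with hSM
  have hdistSM : dist SM S < ε/2 := hF₀ _ hsub
  have hSMle : SM ≤ S := sum_le_hasSum _ (fun t _ => hc0 t) hsum
  have hSM0 : 0 ≤ SM := Finset.sum_nonneg fun t _ => hc0 t
  have hS0 : 0 ≤ S := le_trans hSM0 hSMle
  have hhalf : S - SM < ε/2 := by
    rw [Real.dist_eq] at hdistSM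
    have := abs_lt.mp hdistSM
    linarith [this.1]
  -- lower bound for the double sum
  have hDlow : ∀ n : ℕ, 2*M + 1 ≤ n →
      ((n : ℝ) - 2*M) * SM ≤ ∑ j : Fin n, ∑ k : Fin n, c ((j : ℤ) - (k : ℤ)) := by
    intro n hn
    have hinner : ∀ j : Fin n, M ≤ (j : ℕ) ∧ (j : ℕ) + M < n →
        SM ≤ ∑ k : Fin n, c ((j : ℤ) - (k : ℤ)) := by
      intro j hj
      rw [sum_shift]
      refine Finset.sum_le_sum_of_subset_of_nonneg ?_ (fun t _ _ => hc0 t)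
      intro t ht
      simp only [Finset.mem_Icc] at ht ⊢
      omega
    have hcard := card_middle n M
    calc ((n : ℝ) - 2*M) * SM
        = ((n - M - M : ℕ) : ℝ) * SM := by
          rw [Nat.cast_sub (by omega), Nat.cast_sub (by omega)]
          ring
      _ = ((Finset.univ.filter (fun j : Fin n => M ≤ (j : ℕ) ∧ (j : ℕ) + M < n)).card : ℝ)
            * SM := by rw [hcard]
      _ ≤ ∑ j ∈ Finset.univ.filter (fun j : Fin n => M ≤ (j : ℕ) ∧ (j : ℕ) + M < n),
            ∑ k : Fin n, c ((j : ℤ) - (k : ℤ)) := by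
          have hb := Finset.card_nsmul_le_sum
            (Finset.univ.filter (fun j : Fin n => M ≤ (j : ℕ) ∧ (j : ℕ) + M < n))
            (fun j => ∑ k : Fin n, c ((j : ℤ) - (k : ℤ))) SM
            (fun j hj => hinner j (by simpa using (Finset.mem_filter.mp hj).2))
          simpa [nsmul_eq_mul] using hb
      _ ≤ ∑ j : Fin n, ∑ k : Fin n, c ((j : ℤ) - (k : ℤ)) := by
          refine Finset.sum_le_sum_of_subset_of_nonneg (Finset.filter_subset _ _) ?_
          intro j _ _
          exact Finset.sum_nonneg fun k _ => hc0 _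
  refine ⟨2*M + 2 + ⌈4*(M : ℝ)*S/ε⌉₊, fun n hn => ?_⟩
  have hn1 : 2*M + 1 ≤ n := by omega
  have hnR : (0 : ℝ) < n := by
    have : (1 : ℕ) ≤ n := by omega
    exact_mod_cast Nat.lt_of_lt_of_le Nat.zero_lt_one this
  have hne : 4*(M : ℝ)*S < n*ε := by
    have h1 : (⌈4*(M : ℝ)*S/ε⌉₊ : ℝ) ≥ 4*(M : ℝ)*S/ε := Nat.le_ceil _
    have h2 : (n : ℝ) ≥ (2*M + 2 + ⌈4*(M : ℝ)*S/ε⌉₊ : ℕ) := by exact_mod_cast hn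
    push_cast at h2
    have h3 : 4*(M : ℝ)*S/ε < n := by linarith
    calc 4*(M : ℝ)*S = (4*(M : ℝ)*S/ε) * ε := by field_simp
      _ < n * ε := by exact mul_lt_mul_of_pos_right h3 hε
  have hD := hDlow n hn1
  have hval : ∑ j : Fin n, (hH n).eigenvalues j * (1 - (hH n).eigenvalues j)
      = (n : ℝ) * S - ∑ j : Fin n, ∑ k : Fin n, c ((j : ℤ) - (k : ℤ)) := hid n
  have hnonneg : 0 ≤ (∑ j : Fin n, (hH n).eigenvalues j * (1 - (hH n).eigenvalues j)) / n :=
    div_nonneg (Finset.sum_nonneg fun j _ => part1 n j) hnR.le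
  rw [Real.dist_0_eq_abs, abs_of_nonneg hnonneg, hval, div_lt_iff₀ hnR]
  have e1 : (n : ℝ)*(S - SM) < n*(ε/2) :=
    mul_lt_mul_of_pos_left hhalf hnR
  have e2 : 2*(M : ℝ)*SM ≤ 2*M*S :=
    mul_le_mul_of_nonneg_left hSMle (by positivity)
  nlinarith [hD]
end
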